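/- Let (M, ∘, e) be an F-manifold with an eventual identity ε and a compatible, torsion-free connection ∇̃, and let X * Y := X ∘ Y ∘ ε^{-1}. The second structure connection ∇^F_X(Y) := ε ∘ ∇̃_X(ε^{-1} ∘ Y) − ∇̃_{ε^{-1}∘Y}(ε) ∘ X is torsion-free and compatible with * on the dual F-manifold (M, *, ε), and it belongs to the family of connections ∇^A_X(Y) = ε∘∇̃_X(ε^{-1}∘Y) + A(Y)∘X with A(Y) = ε∘∇̃_Y(ε^{-1}) + V∘Y for a vector field V. -/

import Mathlib

/-- An algebraic model of the geometric setting of the paper: `R` plays the role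
of the ring `C^∞(M)` of smooth functions on a manifold `M`, and `V` plays the
role of the `C^∞(M)`-module of smooth vector fields on `M`, equipped with its
Lie bracket and with the action of vector fields on functions by derivations. -/
structure SmoothSetting (R V : Type*) [CommRing R] [LieRing V] [Module R V] where
  /-- the action `X(f)` of a vector field `X` on a function `f` -/
  deriv : V → R → R
  deriv_add : ∀ (X : V) (f g : R), deriv X (f + g) = deriv X f + deriv X g
  deriv_mul : ∀ (X : V) (f g : R), deriv X (f * g) = deriv X f * g + f * deriv X g
  add_deriv : ∀ (X Y : V) (f : R), deriv (X + Y) f = deriv X f + deriv Y f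
  smul_deriv : ∀ (f : R) (X : V) (g : R), deriv (f • X) g = f * deriv X g
  bracket_deriv : ∀ (X Y : V) (f : R),
    deriv ⁅X, Y⁆ f = deriv X (deriv Y f) - deriv Y (deriv X f)
  bracket_smul : ∀ (X : V) (f : R) (Y : V), ⁅X, f • Y⁆ = f • ⁅X, Y⁆ + deriv X f • Y

/-- `(m, e)` is an F-manifold structure: `m` is a fiber-preserving (i.e.
`C^∞(M)`-bilinear) commutative associative multiplication on vector fields with
unit field `e`, satisfying the Hertling–Manin integrability condition
`L_{X∘Y}(∘) = X ∘ L_Y(∘) + Y ∘ L_X(∘)`. -/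
structure IsFManifold (R : Type*) {V : Type*} [CommRing R] [LieRing V] [Module R V]
    (m : V → V → V) (e : V) : Prop where
  add_left : ∀ X Y Z : V, m (X + Y) Z = m X Z + m Y Z
  smul_left : ∀ (f : R) (X Y : V), m (f • X) Y = f • m X Y
  comm : ∀ X Y : V, m X Y = m Y X
  assoc : ∀ X Y Z : V, m (m X Y) Z = m X (m Y Z)
  unit : ∀ X : V, m e X = X
  hertling_manin : ∀ X Y Z W : V,
    ⁅m X Y, m Z W⁆ - m ⁅m X Y, Z⁆ W - m Z ⁅m X Y, W⁆ =
      m X (⁅Y, m Z W⁆ - m ⁅Y, Z⁆ W - m Z ⁅Y, W⁆)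
        + m Y (⁅X, m Z W⁆ - m ⁅X, Z⁆ W - m Z ⁅X, W⁆)

/-- The dual multiplication `X * Y := X ∘ Y ∘ ε⁻¹` determined by an invertible
vector field `ε` with inverse `εinv`. -/
def dualMul {V : Type*} (m : V → V → V) (εinv : V) : V → V → V :=
  fun X Y => m (m X Y) εinv

/-- `ε` (with inverse `εinv`) is an eventual identity on the F-manifold `(m, e)`:
it is invertible and the dual multiplication `X * Y = X ∘ Y ∘ ε⁻¹` defines an
F-manifold structure on `M` with unit field `ε`. -/
def IsEventualIdentity (R : Type*) {V : Type*} [CommRing R] [LieRing V] [Module R V]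
    (m : V → V → V) (e ε εinv : V) : Prop :=
  m ε εinv = e ∧ IsFManifold R (dualMul m εinv) ε

/-- `nabla` is a (Koszul) connection on the tangent bundle, i.e. on vector fields. -/
structure IsConnection {R V : Type*} [CommRing R] [LieRing V] [Module R V]
    (S : SmoothSetting R V) (nabla : V → V → V) : Prop where
  add_left : ∀ X Y Z : V, nabla (X + Y) Z = nabla X Z + nabla Y Z
  smul_left : ∀ (f : R) (X Y : V), nabla (f • X) Y = f • nabla X Y
  add_right : ∀ X Y Z : V, nabla X (Y + Z) = nabla X Y + nabla X Z
  leibniz : ∀ (X : V) (f : R) (Y : V), nabla X (f • Y) = S.deriv X f • Y + f • nabla X Y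

/-- `nabla` is torsion-free. -/
def IsTorsionFree {V : Type*} [LieRing V] (nabla : V → V → V) : Prop :=
  ∀ X Y, nabla X Y - nabla Y X = ⁅X, Y⁆

/-- The covariant derivative `∇_X(∘)(Y, Z)` of a multiplication `m` with respect
to a connection `nabla`. -/
def covMul {V : Type*} [LieRing V] (nabla m : V → V → V) (X Y Z : V) : V :=
  nabla X (m Y Z) - m (nabla X Y) Z - m Y (nabla X Z)

/-- `nabla` is compatible with the multiplication `m`: the vector valued tensor
`∇(∘)` is totally symmetric. -/
def IsCompatible {V : Type*} [LieRing V] (nabla m : V → V → V) : Prop :=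
  ∀ X Y Z, covMul nabla m X Y Z = covMul nabla m Y X Z ∧
    covMul nabla m X Y Z = covMul nabla m X Z Y

/-- The curvature `R^∇_{X,Y}Z = ∇_X∇_Y Z − ∇_Y∇_X Z − ∇_{[X,Y]}Z`. -/
def curv {V : Type*} [LieRing V] (nabla : V → V → V) (X Y Z : V) : V :=
  nabla X (nabla Y Z) - nabla Y (nabla X Z) - nabla ⁅X, Y⁆ Z

/-- `nabla` is flat. -/
def IsFlat {V : Type*} [LieRing V] (nabla : V → V → V) : Prop :=
  ∀ X Y Z, curv nabla X Y Z = 0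

/-- The curvature condition
`V∘R_{Z,Y}X + Y∘R_{V,Z}X + Z∘R_{Y,V}X = 0` of Lorenzoni–Pedroni. -/
def CurvCircCond {V : Type*} [LieRing V] (m nabla : V → V → V) : Prop :=
  ∀ X Y Z W, m W (curv nabla Z Y X) + m Y (curv nabla W Z X)
    + m Z (curv nabla Y W X) = 0

/-- A special family of connections on the F-manifold `(m, e)`: the family of
all `∇̃^V_X(Y) = ∇̃_X(Y) + V∘X∘Y`, `V` a vector field, where `∇̃` is some
torsion-free connection compatible with `m`. -/
def IsSpecialFamily {R V : Type*} [CommRing R] [LieRing V] [Module R V]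
    (S : SmoothSetting R V) (m : V → V → V) (SF : Set (V → V → V)) : Prop :=
  ∃ nt : V → V → V, IsConnection S nt ∧ IsTorsionFree nt ∧ IsCompatible nt m ∧
    SF = { n | ∃ W : V, n = fun X Y => nt X Y + m (m W X) Y }

/-- The connection `∇^W_X(Y) = ε∘∇̃_X(ε⁻¹∘Y) − ∇̃_{ε⁻¹∘Y}(ε)∘X + W*X*Y` on the
dual F-manifold, where `*` is the dual multiplication. -/
def dualConn {V : Type*} [LieRing V] (m : V → V → V) (ε εinv : V)
    (nt : V → V → V) (W : V) : V → V → V :=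
  fun X Y => m ε (nt X (m εinv Y)) - m (nt (m εinv Y) ε) X
    + dualMul m εinv (dualMul m εinv W X) Y

/-- The dual family `D_ε(S̃)` built from a chosen connection `nt ∈ S̃`. -/
def dualFamily {V : Type*} [LieRing V] (m : V → V → V) (ε εinv : V)
    (nt : V → V → V) : Set (V → V → V) :=
  { n | ∃ W : V, n = dualConn m ε εinv nt W }

/-- The dual family `D_ε(S̃)` of a family of connections `S̃`. -/
def dualFamilyOfSet {V : Type*} [LieRing V] (m : V → V → V) (ε εinv : V)
    (SF : Set (V → V → V)) : Set (V → V → V) :=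
  { n | ∃ nt ∈ SF, ∃ W : V, n = dualConn m ε εinv nt W }

/-- The second structure connection
`∇^F_X(Y) = ε∘∇̃_X(ε⁻¹∘Y) − ∇̃_{ε⁻¹∘Y}(ε)∘X` of `(M, ∘, e, ε, ∇̃)`. -/
def secondConn {V : Type*} [LieRing V] (m : V → V → V) (ε εinv : V)
    (nt : V → V → V) : V → V → V :=
  fun X Y => m ε (nt X (m εinv Y)) - m (nt (m εinv Y) ε) X

/-- The connection
`∇_X(Y) = ε∘∇̃_X(ε⁻¹∘Y) − ∇̃_{ε⁻¹∘Y}(ε)∘X + (1/2)[ε⁻¹,ε]∘X∘Y + U*X*Y`. -/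
def uDualConn {V : Type*} [LieRing V] [Module ℚ V] (m : V → V → V)
    (ε εinv U : V) (nt : V → V → V) : V → V → V :=
  fun X Y => secondConn m ε εinv nt X Y + (2 : ℚ)⁻¹ • m (m ⁅εinv, ε⁆ X) Y
    + dualMul m εinv (dualMul m εinv U X) Y

/-- The `k`-th power `X^k` of a vector field with respect to the multiplication
`m` with unit `e`. -/
def mpow {V : Type*} (m : V → V → V) (e X : V) : ℕ → V
  | 0 => e
  | k + 1 => m X (mpow m e X k)

/-- The Legendre transformation `L_u(S̃) = { u⁻¹∘∇̃_X(u∘Y) : ∇̃ ∈ S̃ }` of a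
family of connections `S̃` by an invertible vector field `u` (with inverse
`uinv`). -/
def legFamily {V : Type*} (m : V → V → V) (uinv u : V)
    (SF : Set (V → V → V)) : Set (V → V → V) :=
  { n | ∃ nt ∈ SF, n = fun X Y => m uinv (nt X (m u Y)) }

/-- **Proposition 4.9.** The second structure connection
`∇^F_X(Y) = ε∘∇̃_X(ε⁻¹∘Y) − ∇̃_{ε⁻¹∘Y}(ε)∘X` of an F-manifold `(M, ∘, e)` with
eventual identity `ε` and compatible torsion-free connection `∇̃` is a
torsion-free connection, compatible with `*` on the dual F-manifold
`(M, *, ε)`, and it belongs to the family `∇^A_X(Y) = ε∘∇̃_X(ε⁻¹∘Y) + A(Y)∘X`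
with `A(Y) = ε∘∇̃_Y(ε⁻¹) + V∘Y` for a vector field `V`. -/
theorem statement6 {R V : Type*} [CommRing R] [LieRing V] [Module R V]
    (S : SmoothSetting R V) (m : V → V → V) (e ε εinv : V)
    (hF : IsFManifold R m e) (hev : IsEventualIdentity R m e ε εinv)
    (nt : V → V → V) (hc : IsConnection S nt) (htf : IsTorsionFree nt)
    (hcm : IsCompatible nt m) :
    IsConnection S (secondConn m ε εinv nt) ∧
      IsTorsionFree (secondConn m ε εinv nt) ∧
      IsCompatible (secondConn m ε εinv nt) (dualMul m εinv) ∧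
      ∃ W : V, ∀ X Y : V, secondConn m ε εinv nt X Y =
        m ε (nt X (m εinv Y)) + m (m ε (nt Y εinv) + m W Y) X := by
  obtain ⟨h1, hDF⟩ := hev
  -- basic multiplication lemmas
  have hmul_one : ∀ a : V, m a e = a := fun a => by rw [hF.comm]; exact hF.unit a
  have hldist : ∀ a b d : V, m a (b + d) = m a b + m a d := fun a b d => by
    rw [hF.comm a (b + d), hF.add_left, hF.comm b a, hF.comm d a]
  have hzm : ∀ a : V, m 0 a = 0 := fun a => by
    have h := hF.add_left 0 0 a
    rw [add_zero] at h
    have h2 : m 0 a + m 0 a = m 0 a + 0 := by rw [add_zero]; exact h.symm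
    exact add_left_cancel h2
  have hmz : ∀ a : V, m a 0 = 0 := fun a => by rw [hF.comm]; exact hzm a
  letI : CommRing V :=
    { (inferInstance : AddCommGroup V) with
      mul := m
      one := e
      mul_assoc := hF.assoc
      mul_comm := hF.comm
      one_mul := hF.unit
      mul_one := hmul_one
      left_distrib := hldist
      right_distrib := hF.add_left
      zero_mul := hzm
      mul_zero := hmz }
  have hm : ∀ a b : V, m a b = a * b := fun _ _ => rfl
  have h1' : ε * εinv = (1 : V) := h1
  -- compatibility of nt with m, in ring notation
  have hcm1 : ∀ a b d : V, nt a (b * d) - nt a b * d - b * nt a d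
      = nt b (a * d) - nt b a * d - a * nt b d := fun a b d => (hcm a b d).1
  -- ∇ e is multiplication by ∇_e e
  have hnt1' : ∀ a b : V, nt a 1 * b = nt b 1 * a := by
    intro a b
    have h := (((hcm a 1 b).2).trans ((hcm a b 1).1)).trans ((hcm b a 1).2)
    have h' : nt a (1 * b) - nt a 1 * b - 1 * nt a b
        = nt b (1 * a) - nt b 1 * a - 1 * nt b a := h
    simp only [one_mul] at h'
    linear_combination -h'
  have hnt1 : ∀ a : V, nt a 1 = nt 1 1 * a := by
    intro a
    have h := hnt1' a 1
    rw [mul_one] at h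
    exact h
  -- L_ε(*) = 0 from the dual Hertling–Manin condition at (ε, ε)
  have hde : dualMul m εinv ε ε = ε := by
    show m (m ε ε) εinv = ε
    simp only [hm]; linear_combination ε * h1'
  have hL2 : ∀ Z W : V, ⁅ε, Z * W * εinv⁆ - ⁅ε, Z⁆ * W * εinv - Z * ⁅ε, W⁆ * εinv = 0 := by
    intro Z W
    have h := hDF.hertling_manin ε ε Z W
    rw [hde] at h
    simp only [dualMul] at h
    simp only [hm] at h
    linear_combination -h - 2 * (⁅ε, Z * W * εinv⁆ - ⁅ε, Z⁆ * W * εinv - Z * ⁅ε, W⁆ * εinv) * h1'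
  -- L_ε(∘)(a,b) = -[ε,e]∘a∘b
  have hg : ∀ a b : V, ⁅ε, a * b⁆ - ⁅ε, a⁆ * b - a * ⁅ε, b⁆
      = (εinv * ⁅ε, ε * a⁆ - ⁅ε, a⁆) * b := by
    intro a b
    have h := hL2 (ε * a) b
    rw [show ε * a * b * εinv = a * b from by linear_combination a * b * h1'] at h
    linear_combination h + a * ⁅ε, b⁆ * h1'
  have hw : ∀ a : V, εinv * ⁅ε, ε * a⁆ - ⁅ε, a⁆ = -(⁅ε, (1 : V)⁆ * a) := by
    intro a
    have h := hg a 1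
    simp only [mul_one] at h
    linear_combination -h
  have hLe : ∀ a b : V, ⁅ε, a * b⁆ - ⁅ε, a⁆ * b - a * ⁅ε, b⁆ = -(⁅ε, (1 : V)⁆ * (a * b)) := by
    intro a b
    linear_combination hg a b + b * hw a
  -- the key Λ-identity
  have hLam : ∀ a b : V, nt a (ε * b) - ε * nt a b + a * nt b ε
      = nt (a * b) ε - ⁅ε, (1 : V)⁆ * (a * b) := by
    intro a b
    have hs := hcm1 a ε b
    have t1 := htf (a * b) ε
    have t2 := htf a ε
    have t3 := htf b ε
    have sk1 : ⁅a * b, ε⁆ = -⁅ε, a * b⁆ := (lie_skew (a * b) ε).symm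
    have sk2 : ⁅a, ε⁆ = -⁅ε, a⁆ := (lie_skew a ε).symm
    have sk3 : ⁅b, ε⁆ = -⁅ε, b⁆ := (lie_skew b ε).symm
    linear_combination hs - t1 + b * t2 + a * t3 + hLe a b - sk1 + b * sk2 + a * sk3
  -- the second structure connection is a connection
  have m_smulr : ∀ (f : R) (a b : V), m a (f • b) = f • m a b := fun f a b => by
    rw [hF.comm, hF.smul_left, hF.comm]
  have mεc : ∀ a : V, m ε (m εinv a) = a := fun a => by
    rw [← hF.assoc, h1, hF.unit]
  have conn : IsConnection S (secondConn m ε εinv nt) := by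
    constructor
    · intro X Y Z
      simp only [secondConn]
      rw [hc.add_left, hldist, hldist]
      abel
    · intro f X Y
      simp only [secondConn]
      rw [hc.smul_left, m_smulr, m_smulr, smul_sub]
    · intro X Y Z
      simp only [secondConn]
      rw [hldist εinv Y Z, hc.add_right, hldist, hc.add_left, hF.add_left]
      abel
    · intro X f Y
      simp only [secondConn]
      rw [m_smulr f εinv Y, hc.leibniz, hldist, m_smulr, m_smulr, mεc,
        hc.smul_left, hF.smul_left, smul_sub]
      abel
  -- torsion-freeness
  have tf : IsTorsionFree (secondConn m ε εinv nt) := by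
    intro X Y
    simp only [secondConn, hm]
    have hA := hLam X (εinv * Y)
    rw [show ε * (εinv * Y) = Y from by linear_combination Y * h1'] at hA
    rw [show X * (εinv * Y) = Y * (εinv * X) from by ring] at hA
    have hB := hLam Y (εinv * X)
    rw [show ε * (εinv * X) = X from by linear_combination X * h1'] at hB
    have ht := htf X Y
    linear_combination hB - hA + ht
  -- compatibility with the dual multiplication
  have Tform : ∀ X y z : V, covMul (secondConn m ε εinv nt) (dualMul m εinv) X (ε * y) (ε * z)
      = ε * (nt X (y * z) - nt X y * z - y * nt X z)
        - X * (nt (y * z) ε - z * nt y ε - y * nt z ε) := by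
    intro X y z
    simp only [covMul, secondConn, dualMul]
    simp only [hm]
    rw [show εinv * (ε * y * (ε * z) * εinv) = y * z from by
      linear_combination (ε * εinv + 1) * (y * z) * h1']
    rw [show εinv * (ε * y) = y from by linear_combination y * h1']
    rw [show εinv * (ε * z) = z from by linear_combination z * h1']
    linear_combination (X * z * nt y ε + X * y * nt z ε - ε * z * nt X y - ε * y * nt X z) * h1'
  have main : ∀ x y z : V, covMul (secondConn m ε εinv nt) (dualMul m εinv) (ε * x) (ε * y) (ε * z)
      = covMul (secondConn m ε εinv nt) (dualMul m εinv) (ε * y) (ε * x) (ε * z) := by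
    intro x y z
    rw [Tform (ε * x) y z, Tform (ε * y) x z]
    have h1x := hcm1 (ε * x) y z
    rw [show ε * x * z = ε * (x * z) from mul_assoc ε x z] at h1x
    have h1y := hcm1 (ε * y) x z
    rw [show ε * y * z = ε * (y * z) from mul_assoc ε y z] at h1y
    have hsw := hcm1 y x z
    have hl1 := hLam y (x * z)
    rw [show y * (x * z) = x * (y * z) from mul_left_comm y x z] at hl1
    have hl2 := hLam x (y * z)
    have hl3 := hLam y x
    rw [show y * x = x * y from mul_comm y x] at hl3
    have hl4 := hLam x y
    linear_combination ε * h1x - ε * h1y + ε * ε * hsw + ε * hl1 - ε * hl2 - ε * z * hl3 + ε * z * hl4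
  have parta : ∀ X Y Z : V, covMul (secondConn m ε εinv nt) (dualMul m εinv) X Y Z
      = covMul (secondConn m ε εinv nt) (dualMul m εinv) Y X Z := by
    intro X Y Z
    have h := main (εinv * X) (εinv * Y) (εinv * Z)
    rw [show ε * (εinv * X) = X from by linear_combination X * h1',
      show ε * (εinv * Y) = Y from by linear_combination Y * h1',
      show ε * (εinv * Z) = Z from by linear_combination Z * h1'] at h
    exact h
  have pb : ∀ X y z : V, covMul (secondConn m ε εinv nt) (dualMul m εinv) X (ε * y) (ε * z)
      = covMul (secondConn m ε εinv nt) (dualMul m εinv) X (ε * z) (ε * y) := by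
    intro X y z
    rw [Tform X y z, Tform X z y]
    rw [show z * y = y * z from mul_comm z y]
    ring
  have partb : ∀ X Y Z : V, covMul (secondConn m ε εinv nt) (dualMul m εinv) X Y Z
      = covMul (secondConn m ε εinv nt) (dualMul m εinv) X Z Y := by
    intro X Y Z
    have h := pb X (εinv * Y) (εinv * Z)
    rw [show ε * (εinv * Y) = Y from by linear_combination Y * h1',
      show ε * (εinv * Z) = Z from by linear_combination Z * h1'] at h
    exact h
  have compat : IsCompatible (secondConn m ε εinv nt) (dualMul m εinv) :=
    fun X Y Z => ⟨parta X Y Z, partb X Y Z⟩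
  refine ⟨conn, tf, compat, ⟨-(nt 1 1) - nt εinv ε - εinv * ⁅ε, (1 : V)⁆, ?_⟩⟩
  intro X Y
  simp only [secondConn, hm]
  have hstep := hLam Y εinv
  rw [h1'] at hstep
  rw [show Y * εinv = εinv * Y from mul_comm Y εinv] at hstep
  rw [hnt1 Y] at hstep
  linear_combination X * hstep
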